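/- Any triangular prism (the convex hull of a triangle T and a translate T + v, where v is not parallel to the plane of T) is 5-equiprojective: every orthogonal projection in a direction not parallel to any of its faces is a pentagon. -/

import Mathlib

/-- A face of a convex polyhedron: a two-dimensional exposed face. -/
def IsFaceOf (P F : Set (EuclideanSpace ℝ (Fin 3))) : Prop :=
  IsExposed ℝ P F ∧ Module.finrank ℝ (vectorSpan ℝ F) = 2

noncomputable def shadow (P : Set (EuclideanSpace ℝ (Fin 3)))
    (d : EuclideanSpace ℝ (Fin 3)) : Set ((ℝ ∙ d)ᗮ : Submodule ℝ _) :=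
  (Submodule.orthogonalProjectionOnto (ℝ ∙ d)ᗮ) '' P

def IsKGon {V : Type*} [AddCommGroup V] [Module ℝ V] (k : ℕ) (A : Set V) : Prop :=
  (A.extremePoints ℝ).ncard = k



section Aux
variable {V : Type*} [AddCommGroup V] [Module ℝ V]

lemma hull_le_halfspace {S : Set V} (f : V →ₗ[ℝ] ℝ) {M : ℝ} (h : ∀ y ∈ S, f y ≤ M) :
    ∀ z ∈ convexHull ℝ S, f z ≤ M :=
  fun _ hz => convexHull_min h (convex_halfSpace_le f.isLinear M) hz

lemma argmax_unique' {T : Set V} (hT : T.Nonempty) {x : V} (f : V →ₗ[ℝ] ℝ) {c : ℝ}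
    (hc : c < f x) (h : ∀ y ∈ T, f y ≤ c) :
    ∀ z ∈ convexHull ℝ (insert x T), f x ≤ f z → z = x := by
  intro z hz hfz
  rw [convexHull_insert hT, mem_convexJoin] at hz
  obtain ⟨p, hp, q, hq, s, t, hs, ht, hst, hx⟩ := hz
  rw [Set.mem_singleton_iff] at hp
  rw [hp] at hx
  have hfq : f q ≤ c := hull_le_halfspace f h q hq
  have hfz' : s * f x + t * f q = f z := by
    rw [← hx]; simp [map_add, map_smul, smul_eq_mul]
  have ht0 : t = 0 := by
    by_contra htne
    have htpos : 0 < t := lt_of_le_of_ne ht (Ne.symm htne)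
    have hst' : s * f x + t * f x = f x := by rw [← add_mul, hst, one_mul]
    nlinarith [mul_pos htpos (sub_pos.2 (lt_of_le_of_lt hfq hc))]
  rw [← hx, ht0]
  simp [show s = 1 by linarith]

lemma extreme_of_strict_max {T : Set V} (hT : T.Nonempty) {x : V} (f : V →ₗ[ℝ] ℝ) {c : ℝ}
    (hc : c < f x) (h : ∀ y ∈ T, f y ≤ c) :
    x ∈ (convexHull ℝ (insert x T)).extremePoints ℝ := by
  have hmax : ∀ z ∈ convexHull ℝ (insert x T), f z ≤ f x := by
    refine hull_le_halfspace f ?_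
    rintro y (rfl | hy)
    · exact le_rfl
    · exact (h y hy).trans hc.le
  refine mem_extremePoints.2 ⟨subset_convexHull ℝ _ (Set.mem_insert _ _), ?_⟩
  intro x1 hx1 x2 hx2 hseg
  obtain ⟨s, t, hs, ht, hst, hx⟩ := hseg
  have h1 : f x1 ≤ f x := hmax x1 hx1
  have h2 : f x2 ≤ f x := hmax x2 hx2
  have hfx : s * f x1 + t * f x2 = f x := by
    rw [← hx]; simp [map_add, map_smul, smul_eq_mul]
  have e1 : f x ≤ f x1 := by
    have hst' : s * f x + t * f x = f x := by rw [← add_mul, hst, one_mul]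
    have hs' : s * f x ≤ s * f x1 := by nlinarith [mul_le_mul_of_nonneg_left h2 ht.le]
    exact le_of_mul_le_mul_left hs' hs
  have e2 : f x ≤ f x2 := by
    have hst' : s * f x + t * f x = f x := by rw [← add_mul, hst, one_mul]
    have ht' : t * f x ≤ t * f x2 := by nlinarith [mul_le_mul_of_nonneg_left h1 hs.le]
    exact le_of_mul_le_mul_left ht' ht
  exact ⟨argmax_unique' hT f hc h x1 hx1 e1, argmax_unique' hT f hc h x2 hx2 e2⟩

lemma extreme_insert4 (x y1 y2 y3 y4 : V) (f : V →ₗ[ℝ] ℝ)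
    (h1 : f y1 < f x) (h2 : f y2 < f x) (h3 : f y3 < f x) (h4 : f y4 < f x) :
    x ∈ (convexHull ℝ ({x, y1, y2, y3, y4} : Set V)).extremePoints ℝ := by
  refine extreme_of_strict_max (T := {y1, y2, y3, y4}) ⟨y1, by simp⟩ f
    (c := max (max (f y1) (f y2)) (max (f y3) (f y4))) (by simp [max_lt_iff, *]) ?_
  rintro y (rfl | rfl | rfl | rfl) <;> simp [le_max_iff, le_refl]

end Aux

section Core
set_option maxHeartbeats 1000000
variable {V : Type*} [AddCommGroup V] [Module ℝ V]

lemma core_pentagon (u1 u2 w : V) (f g : V →ₗ[ℝ] ℝ)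
    (hf1 : f u1 = 1) (hf2 : f u2 = 0) (hg1 : g u1 = 0) (hg2 : g u2 = 1)
    (α β : ℝ) (hα : 0 < α) (hβ : 0 < β) (hw : w = α • u1 + β • u2) (o : V) :
    ((convexHull ℝ ({o, o + u1, o + u2, o + w, o + u1 + w, o + u2 + w} : Set V)).extremePoints
      ℝ).ncard = 5 := by
  have hαβ : (0:ℝ) < α + β := by linarith
  have h1αβ : (0:ℝ) < 1 + α + β := by linarith
  have hfg : ∀ z1 z2 : V, (f z1 ≠ f z2 ∨ g z1 ≠ g z2) → z1 ≠ z2 := by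
    rintro z1 z2 (h | h) rfl <;> exact h rfl
  have m0 : o ∈ convexHull ℝ ({o, o + u1, o + u2, o + u1 + w, o + u2 + w} : Set V) :=
    subset_convexHull ℝ _ (by simp)
  have m1 : o + u1 ∈ convexHull ℝ ({o, o + u1, o + u2, o + u1 + w, o + u2 + w} : Set V) :=
    subset_convexHull ℝ _ (by simp)
  have m2 : o + u2 ∈ convexHull ℝ ({o, o + u1, o + u2, o + u1 + w, o + u2 + w} : Set V) :=
    subset_convexHull ℝ _ (by simp)
  have m3 : o + u1 + w ∈ convexHull ℝ ({o, o + u1, o + u2, o + u1 + w, o + u2 + w} : Set V) :=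
    subset_convexHull ℝ _ (by simp)
  have m4 : o + u2 + w ∈ convexHull ℝ ({o, o + u1, o + u2, o + u1 + w, o + u2 + w} : Set V) :=
    subset_convexHull ℝ _ (by simp)
  have hm : (α/(α+β)) • (o + u1 + w) + (β/(α+β)) • (o + u2 + w) ∈
      convexHull ℝ ({o, o + u1, o + u2, o + u1 + w, o + u2 + w} : Set V) :=
    (convex_convexHull ℝ _).segment_subset m3 m4
      ⟨α/(α+β), β/(α+β), by positivity, by positivity, by field_simp, rfl⟩
  have hQ0 : o + w ∈ convexHull ℝ ({o, o + u1, o + u2, o + u1 + w, o + u2 + w} : Set V) := by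
    refine (convex_convexHull ℝ _).segment_subset m0 hm
      ⟨1/(1+α+β), (α+β)/(1+α+β), by positivity, by positivity, by field_simp <;> ring, ?_⟩
    rw [hw]
    match_scalars <;> field_simp <;> ring
  have hhull : convexHull ℝ ({o, o + u1, o + u2, o + w, o + u1 + w, o + u2 + w} : Set V)
      = convexHull ℝ ({o, o + u1, o + u2, o + u1 + w, o + u2 + w} : Set V) := by
    refine Set.Subset.antisymm ?_ (convexHull_mono (by intro z hz; simp at hz ⊢; tauto))
    refine convexHull_min ?_ (convex_convexHull ℝ _)
    rintro z (rfl | rfl | rfl | rfl | rfl | rfl)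
    exacts [m0, m1, m2, hQ0, m3, m4]
  have hE : (convexHull ℝ ({o, o + u1, o + u2, o + u1 + w, o + u2 + w} : Set V)).extremePoints ℝ
      = ({o, o + u1, o + u2, o + u1 + w, o + u2 + w} : Set V) := by
    refine Set.Subset.antisymm extremePoints_convexHull_subset ?_
    intro z hz
    simp only [Set.mem_insert_iff, Set.mem_singleton_iff] at hz
    rcases hz with h | h | h | h | h <;> rw [h]
    · exact extreme_insert4 o (o+u1) (o+u2) (o+u1+w) (o+u2+w) (-(f+g))
        (by simp [hw, map_smul, hf1, hf2, hg1, hg2, smul_eq_mul] <;> nlinarith [mul_pos hα hβ])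
        (by simp [hw, map_smul, hf1, hf2, hg1, hg2, smul_eq_mul] <;> nlinarith [mul_pos hα hβ])
        (by simp [hw, map_smul, hf1, hf2, hg1, hg2, smul_eq_mul] <;> nlinarith [mul_pos hα hβ])
        (by simp [hw, map_smul, hf1, hf2, hg1, hg2, smul_eq_mul] <;> nlinarith [mul_pos hα hβ])
    · have hperm : ({o, o + u1, o + u2, o + u1 + w, o + u2 + w} : Set V)
          = {o+u1, o, o+u2, o+u1+w, o+u2+w} := by
        ext z; simp only [Set.mem_insert_iff, Set.mem_singleton_iff]; tauto
      rw [hperm]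
      refine extreme_insert4 (o+u1) o (o+u2) (o+u1+w) (o+u2+w)
        (β • f - (α+α*β+β) • g) ?_ ?_ ?_ ?_ <;>
        simp [hw, map_smul, hf1, hf2, hg1, hg2, smul_eq_mul, LinearMap.sub_apply,
          LinearMap.smul_apply] <;>
        nlinarith [mul_pos hα hβ, mul_pos hβ hβ, mul_pos hα hα,
          mul_pos (mul_pos hα hβ) hβ, mul_pos (mul_pos hα hβ) hα]
    · have hperm : ({o, o + u1, o + u2, o + u1 + w, o + u2 + w} : Set V)
          = {o+u2, o, o+u1, o+u1+w, o+u2+w} := by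
        ext z; simp only [Set.mem_insert_iff, Set.mem_singleton_iff]; tauto
      rw [hperm]
      refine extreme_insert4 (o+u2) o (o+u1) (o+u1+w) (o+u2+w)
        (α • g - (β+α*β+α) • f) ?_ ?_ ?_ ?_ <;>
        simp [hw, map_smul, hf1, hf2, hg1, hg2, smul_eq_mul, LinearMap.sub_apply,
          LinearMap.smul_apply] <;>
        nlinarith [mul_pos hα hβ, mul_pos hβ hβ, mul_pos hα hα,
          mul_pos (mul_pos hα hβ) hβ, mul_pos (mul_pos hα hβ) hα]
    · have hperm : ({o, o + u1, o + u2, o + u1 + w, o + u2 + w} : Set V)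
          = {o+u1+w, o, o+u1, o+u2, o+u2+w} := by
        ext z; simp only [Set.mem_insert_iff, Set.mem_singleton_iff]; tauto
      rw [hperm]
      refine extreme_insert4 (o+u1+w) o (o+u1) (o+u2) (o+u2+w)
        ((2:ℝ) • f + g) ?_ ?_ ?_ ?_ <;>
        simp [hw, map_smul, hf1, hf2, hg1, hg2, smul_eq_mul, LinearMap.add_apply,
          LinearMap.smul_apply] <;> nlinarith
    · have hperm : ({o, o + u1, o + u2, o + u1 + w, o + u2 + w} : Set V)
          = {o+u2+w, o, o+u1, o+u2, o+u1+w} := by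
        ext z; simp only [Set.mem_insert_iff, Set.mem_singleton_iff]; tauto
      rw [hperm]
      refine extreme_insert4 (o+u2+w) o (o+u1) (o+u2) (o+u1+w)
        (f + (2:ℝ) • g) ?_ ?_ ?_ ?_ <;>
        simp [hw, map_smul, hf1, hf2, hg1, hg2, smul_eq_mul, LinearMap.add_apply,
          LinearMap.smul_apply] <;> nlinarith
  have hn1 : o ∉ ({o + u1, o + u2, o + u1 + w, o + u2 + w} : Set V) := by
    simp only [Set.mem_insert_iff, Set.mem_singleton_iff, not_or]
    refine ⟨hfg _ _ (Or.inl ?_), hfg _ _ (Or.inr ?_), hfg _ _ (Or.inl ?_), hfg _ _ (Or.inr ?_)⟩ <;>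
      simp [hw, map_smul, hf1, hf2, hg1, hg2, smul_eq_mul] <;> linarith
  have hn2 : o + u1 ∉ ({o + u2, o + u1 + w, o + u2 + w} : Set V) := by
    simp only [Set.mem_insert_iff, Set.mem_singleton_iff, not_or]
    refine ⟨hfg _ _ (Or.inl ?_), hfg _ _ (Or.inl ?_), hfg _ _ (Or.inr ?_)⟩ <;>
      simp [hw, map_smul, hf1, hf2, hg1, hg2, smul_eq_mul] <;> linarith
  have hn3 : o + u2 ∉ ({o + u1 + w, o + u2 + w} : Set V) := by
    simp only [Set.mem_insert_iff, Set.mem_singleton_iff, not_or]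
    refine ⟨hfg _ _ (Or.inl ?_), hfg _ _ (Or.inr ?_)⟩ <;>
      simp [hw, map_smul, hf1, hf2, hg1, hg2, smul_eq_mul] <;> linarith
  have hn4 : o + u1 + w ∉ ({o + u2 + w} : Set V) := by
    simp only [Set.mem_singleton_iff]
    refine hfg _ _ (Or.inl ?_)
    simp only [map_add, hw, map_smul, hf1, hf2, hg1, hg2, smul_eq_mul]
    intro hcon
    linarith
  rw [hhull, hE]
  rw [Set.ncard_insert_of_notMem hn1 (Set.toFinite _),
      Set.ncard_insert_of_notMem hn2 (Set.toFinite _),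
      Set.ncard_insert_of_notMem hn3 (Set.toFinite _),
      Set.ncard_insert_of_notMem hn4 (Set.toFinite _), Set.ncard_singleton]

end Core

section Key
variable {V : Type*} [AddCommGroup V] [Module ℝ V]
set_option maxHeartbeats 1000000

lemma key_pentagon (u1 u2 w : V) (f g : V →ₗ[ℝ] ℝ)
    (hf1 : f u1 = 1) (hf2 : f u2 = 0) (hg1 : g u1 = 0) (hg2 : g u2 = 1)
    (α β : ℝ) (hα : α ≠ 0) (hβ : β ≠ 0) (hαβ : α + β ≠ 0) (hw : w = α • u1 + β • u2) (o : V) :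
    ((convexHull ℝ ({o, o + u1, o + u2, o + w, o + u1 + w, o + u2 + w} : Set V)).extremePoints
      ℝ).ncard = 5 := by
  have hf1' : (-f - g) (-u1) = 1 := by
    simp [LinearMap.sub_apply, LinearMap.neg_apply, hf1, hg1]
  have hf2' : (-f - g) (u2 - u1) = 0 := by
    simp [LinearMap.sub_apply, LinearMap.neg_apply, map_sub, hf1, hf2, hg1, hg2]
  have hg1' : g (-u1) = 0 := by simp [hg1]
  have hg2' : g (u2 - u1) = 1 := by simp [map_sub, hg1, hg2]
  have kf1 : f (u1 - u2) = 1 := by simp [map_sub, hf1, hf2]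
  have kf2 : f (-u2) = 0 := by simp [hf2]
  have kg1 : (-f - g) (u1 - u2) = 0 := by
    simp [LinearMap.sub_apply, LinearMap.neg_apply, map_sub, hf1, hf2, hg1, hg2]
  have kg2 : (-f - g) (-u2) = 1 := by
    simp [LinearMap.sub_apply, LinearMap.neg_apply, hf2, hg2]
  rcases hα.lt_or_gt with hα' | hα' <;> rcases hβ.lt_or_gt with hβ' | hβ'
  · -- α < 0, β < 0 : flip
    have h5 := core_pentagon u1 u2 (-w) f g hf1 hf2 hg1 hg2 (-α) (-β) (by linarith) (by linarith)
      (by rw [hw]; module) (o + w)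
    rw [show o + w + u1 = o + u1 + w by abel, show o + w + u2 = o + u2 + w by abel,
      show o + w + -w = o by abel, show o + u1 + w + -w = o + u1 by abel,
      show o + u2 + w + -w = o + u2 by abel] at h5
    rw [show ({o, o + u1, o + u2, o + w, o + u1 + w, o + u2 + w} : Set V)
        = {o + w, o + u1 + w, o + u2 + w, o, o + u1, o + u2} by
      ext z; simp only [Set.mem_insert_iff, Set.mem_singleton_iff]; tauto]
    exact h5
  · -- α < 0, β > 0
    rcases hαβ.lt_or_gt with hs | hs
    · -- α + β < 0 : R4, rebase at o+u1, keep w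
      have h5 := core_pentagon (-u1) (u2 - u1) w (-f - g) g hf1' hf2' hg1' hg2'
        (-(α+β)) β (by linarith) hβ' (by rw [hw]; module) (o + u1)
      rw [show o + u1 + -u1 + w = o + w by abel,
        show o + u1 + (u2 - u1) + w = o + u2 + w by abel,
        show o + u1 + -u1 = o by abel, show o + u1 + (u2 - u1) = o + u2 by abel] at h5
      rw [show ({o, o + u1, o + u2, o + w, o + u1 + w, o + u2 + w} : Set V)
          = {o + u1, o, o + u2, o + u1 + w, o + w, o + u2 + w} by
        ext z; simp only [Set.mem_insert_iff, Set.mem_singleton_iff]; tauto]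
      exact h5
    · -- α + β > 0 : R6, rebase at o+u2+w, flip
      have h5 := core_pentagon (u1 - u2) (-u2) (-w) f (-f - g) kf1 kf2 kg1 kg2
        (-α) (α+β) (by linarith) hs (by rw [hw]; module) (o + u2 + w)
      rw [show o + u2 + w + (u1 - u2) + -w = o + u1 by abel,
        show o + u2 + w + -u2 + -w = o by abel,
        show o + u2 + w + (u1 - u2) = o + u1 + w by abel,
        show o + u2 + w + -u2 = o + w by abel, show o + u2 + w + -w = o + u2 by abel] at h5
      rw [show ({o, o + u1, o + u2, o + w, o + u1 + w, o + u2 + w} : Set V)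
          = {o + u2 + w, o + u1 + w, o + w, o + u2, o + u1, o} by
        ext z; simp only [Set.mem_insert_iff, Set.mem_singleton_iff]; tauto]
      exact h5
  · -- α > 0, β < 0
    rcases hαβ.lt_or_gt with hs | hs
    · -- α + β < 0 : R5, rebase at o+u2, keep w
      have h5 := core_pentagon (u1 - u2) (-u2) w f (-f - g) kf1 kf2 kg1 kg2
        α (-(α+β)) hα' (by linarith) (by rw [hw]; module) (o + u2)
      rw [show o + u2 + (u1 - u2) + w = o + u1 + w by abel,
        show o + u2 + -u2 + w = o + w by abel,
        show o + u2 + (u1 - u2) = o + u1 by abel, show o + u2 + -u2 = o by abel] at h5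
      rw [show ({o, o + u1, o + u2, o + w, o + u1 + w, o + u2 + w} : Set V)
          = {o + u2, o + u1, o, o + u2 + w, o + u1 + w, o + w} by
        ext z; simp only [Set.mem_insert_iff, Set.mem_singleton_iff]; tauto]
      exact h5
    · -- α + β > 0 : R3, rebase at o+u1+w, flip
      have h5 := core_pentagon (-u1) (u2 - u1) (-w) (-f - g) g hf1' hf2' hg1' hg2'
        (α+β) (-β) hs (by linarith) (by rw [hw]; module) (o + u1 + w)
      rw [show o + u1 + w + -u1 + -w = o by abel,
        show o + u1 + w + (u2 - u1) + -w = o + u2 by abel,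
        show o + u1 + w + -u1 = o + w by abel,
        show o + u1 + w + (u2 - u1) = o + u2 + w by abel,
        show o + u1 + w + -w = o + u1 by abel] at h5
      rw [show ({o, o + u1, o + u2, o + w, o + u1 + w, o + u2 + w} : Set V)
          = {o + u1 + w, o + w, o + u2 + w, o + u1, o, o + u2} by
        ext z; simp only [Set.mem_insert_iff, Set.mem_singleton_iff]; tauto]
      exact h5
  · -- α > 0, β > 0
    exact core_pentagon u1 u2 w f g hf1 hf2 hg1 hg2 α β hα' hβ' hw o

end Key

section Face
variable {V : Type*} [AddCommGroup V] [Module ℝ V]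

lemma face_eq {S1 S2 : Set V} (h1 : S1.Nonempty) (h2 : S2.Nonempty) (f : V →ₗ[ℝ] ℝ) {M c : ℝ}
    (hS1 : ∀ y ∈ S1, f y = M) (hS2 : ∀ y ∈ S2, f y ≤ c) (hc : c < M) :
    {x ∈ convexHull ℝ (S1 ∪ S2) | ∀ y ∈ convexHull ℝ (S1 ∪ S2), f y ≤ f x}
      = convexHull ℝ S1 := by
  have hub : ∀ z ∈ convexHull ℝ (S1 ∪ S2), f z ≤ M := by
    refine hull_le_halfspace f ?_
    rintro y (hy | hy)
    · exact (hS1 y hy).le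
    · exact (hS2 y hy).trans hc.le
  have hS1M : ∀ z ∈ convexHull ℝ S1, f z = M := by
    intro z hz
    refine le_antisymm (hull_le_halfspace f (fun y hy => (hS1 y hy).le) z hz) ?_
    exact convexHull_min (fun y hy => (hS1 y hy).ge) (convex_halfSpace_ge f.isLinear M) hz
  ext x
  constructor
  · rintro ⟨hx, hmax⟩
    have h1' := h1
    obtain ⟨p0, hp0⟩ := h1'
    have hfx : f x = M := le_antisymm (hub x hx) (by
      have := hmax p0 (subset_convexHull ℝ _ (Or.inl hp0))
      rwa [hS1 p0 hp0] at this)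
    rw [convexHull_union h1 h2, mem_convexJoin] at hx
    obtain ⟨p, hp, q, hq, s, t, hs, ht, hst, hx'⟩ := hx
    have hfq : f q ≤ c := hull_le_halfspace f hS2 q hq
    have hfp : f p = M := hS1M p hp
    have hcomb : s * f p + t * f q = f x := by
      rw [← hx']; simp [map_add, map_smul, smul_eq_mul]
    rw [hfp, hfx] at hcomb
    have hstM : s * M + t * M = M := by rw [← add_mul, hst, one_mul]
    have ht0 : t = 0 := by
      by_contra htne
      have htpos : 0 < t := lt_of_le_of_ne ht (Ne.symm htne)
      nlinarith [mul_pos htpos (sub_pos.2 (lt_of_le_of_lt hfq hc))]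
    have : x = p := by rw [← hx', ht0, show s = 1 by linarith]; simp
    rw [this]; exact hp
  · intro hx
    refine ⟨convexHull_mono Set.subset_union_left hx, ?_⟩
    intro y hy
    rw [hS1M x hx]
    exact hub y hy

end Face

section Geo
open scoped RealInnerProductSpace

local notation "E3" => EuclideanSpace ℝ (Fin 3)

lemma exists_normal (W : Submodule ℝ E3) (x : E3) (hx : x ∉ W) :
    ∃ n : E3, (∀ u ∈ W, ⟪n, u⟫ = 0) ∧ ⟪n, x⟫ < 0 := by
  refine ⟨(↑(Submodule.orthogonalProjectionOnto W x) : E3) - x, ?_, ?_⟩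
  · intro u hu
    have h1 : x - ↑(Submodule.orthogonalProjectionOnto W x) ∈ Wᗮ := Submodule.sub_starProjection_mem_orthogonal x
    have h2 := (Submodule.mem_orthogonal' W _).1 h1 u hu
    have h3 : ((↑(Submodule.orthogonalProjectionOnto W x) : E3) - x) = -(x - ↑(Submodule.orthogonalProjectionOnto W x)) := by
      abel
    rw [h3, inner_neg_left, h2, neg_zero]
  · have h1 : x - ↑(Submodule.orthogonalProjectionOnto W x) ∈ Wᗮ := Submodule.sub_starProjection_mem_orthogonal x
    have h2 := (Submodule.mem_orthogonal' W _).1 h1 _ (Submodule.orthogonalProjectionOnto W x).2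
    have hne : x - ↑(Submodule.orthogonalProjectionOnto W x) ≠ 0 := by
      intro h
      exact hx (by rw [← Submodule.starProjection_eq_self_iff (K := W), eq_comm, ← sub_eq_zero]; exact h)
    have e0 : ⟪x - ↑(Submodule.orthogonalProjectionOnto W x), x - ↑(Submodule.orthogonalProjectionOnto W x)⟫
        = ⟪x - ↑(Submodule.orthogonalProjectionOnto W x), x⟫ - ⟪x - ↑(Submodule.orthogonalProjectionOnto W x),
          ↑(Submodule.orthogonalProjectionOnto W x)⟫ := inner_sub_right _ _ _
    have e1 : ⟪x - ↑(Submodule.orthogonalProjectionOnto W x), x - ↑(Submodule.orthogonalProjectionOnto W x)⟫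
        = ‖x - ↑(Submodule.orthogonalProjectionOnto W x)‖^2 := real_inner_self_eq_norm_sq _
    have e2 : (0:ℝ) < ‖x - ↑(Submodule.orthogonalProjectionOnto W x)‖^2 := pow_pos (norm_pos_iff.2 hne) 2
    have h3 : ((↑(Submodule.orthogonalProjectionOnto W x) : E3) - x) = -(x - ↑(Submodule.orthogonalProjectionOnto W x)) := by
      abel
    rw [h3, inner_neg_left]
    linarith

lemma hull_vectorSpan_eq (S : Set E3) :
    vectorSpan ℝ (convexHull ℝ S) = vectorSpan ℝ S := by
  rw [← direction_affineSpan, affineSpan_convexHull, direction_affineSpan]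

lemma quad_face (p q r v : E3) (hrp : r - p ∉ Submodule.span ℝ {q - p, v})
    (hli : LinearIndependent ℝ ![q - p, v]) :
    IsFaceOf (convexHull ℝ {p, q, r, p + v, q + v, r + v}) (convexHull ℝ {p, q, p + v, q + v}) ∧
    vectorSpan ℝ (convexHull ℝ ({p, q, p + v, q + v} : Set E3))
      = Submodule.span ℝ {q - p, v} := by
  obtain ⟨n, hn0, hneg⟩ := exists_normal _ _ hrp
  have hWm1 : q - p ∈ Submodule.span ℝ ({q - p, v} : Set E3) := Submodule.subset_span (by simp)
  have hWm2 : v ∈ Submodule.span ℝ ({q - p, v} : Set E3) := Submodule.subset_span (by simp)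
  have hp' : ∀ u ∈ Submodule.span ℝ ({q - p, v} : Set E3), ⟪n, p + u⟫ = ⟪n, p⟫ := by
    intro u hu; rw [inner_add_right, hn0 u hu, add_zero]
  have hS1 : ∀ y ∈ ({p, q, p + v, q + v} : Set E3), ⟪n, y⟫ = ⟪n, p⟫ := by
    intro y hy
    simp only [Set.mem_insert_iff, Set.mem_singleton_iff] at hy
    rcases hy with h | h | h | h <;> rw [h]
    · rw [show q = p + (q - p) by abel]; exact hp' _ hWm1
    · exact hp' v hWm2
    · rw [show q + v = p + (q - p + v) by abel]; exact hp' _ (add_mem hWm1 hWm2)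
  have hS2 : ∀ y ∈ ({r, r + v} : Set E3), ⟪n, y⟫ ≤ ⟪n, p⟫ + ⟪n, r - p⟫ := by
    intro y hy
    simp only [Set.mem_insert_iff, Set.mem_singleton_iff] at hy
    rcases hy with h | h <;> rw [h]
    · nth_rewrite 1 [show r = p + (r - p) by abel]
      rw [inner_add_right]
    · rw [show r + v = p + (r - p) + v by abel, inner_add_right, hn0 v hWm2, add_zero,
        inner_add_right]
  have hc : ⟪n, p⟫ + ⟪n, r - p⟫ < ⟪n, p⟫ := by linarith
  have hvs : vectorSpan ℝ (convexHull ℝ ({p, q, p + v, q + v} : Set E3))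
      = Submodule.span ℝ {q - p, v} := by
    rw [hull_vectorSpan_eq]
    refine le_antisymm ?_ ?_
    · rw [vectorSpan_def]
      refine Submodule.span_le.2 ?_
      rintro z hz
      rw [Set.mem_vsub] at hz
      obtain ⟨x, hx, y, hy, rfl⟩ := hz
      have hform : ∀ s ∈ ({p, q, p + v, q + v} : Set E3),
          ∃ c1 c2 : ℝ, s = p + c1 • (q - p) + c2 • v := by
        intro s hs
        simp only [Set.mem_insert_iff, Set.mem_singleton_iff] at hs
        rcases hs with h | h | h | h <;> rw [h]
        exacts [⟨0, 0, by module⟩, ⟨1, 0, by module⟩, ⟨0, 1, by module⟩, ⟨1, 1, by module⟩]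
      obtain ⟨c1, c2, hxe⟩ := hform x hx
      obtain ⟨d1, d2, hye⟩ := hform y hy
      show x -ᵥ y ∈ Submodule.span ℝ ({q - p, v} : Set E3)
      rw [vsub_eq_sub, hxe, hye]
      exact Submodule.mem_span_pair.2 ⟨c1 - d1, c2 - d2, by module⟩
    · refine Submodule.span_le.2 ?_
      intro z hz
      simp only [Set.mem_insert_iff, Set.mem_singleton_iff] at hz
      rcases hz with h | h <;> rw [h]
      · have := vsub_mem_vectorSpan ℝ (show q ∈ ({p, q, p + v, q + v} : Set E3) by simp)
          (show p ∈ ({p, q, p + v, q + v} : Set E3) by simp)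
        rwa [vsub_eq_sub] at this
      · have := vsub_mem_vectorSpan ℝ (show p + v ∈ ({p, q, p + v, q + v} : Set E3) by simp)
          (show p ∈ ({p, q, p + v, q + v} : Set E3) by simp)
        rwa [vsub_eq_sub, add_sub_cancel_left] at this
  refine ⟨⟨?_, ?_⟩, hvs⟩
  · intro _
    refine ⟨innerSL ℝ n, ?_⟩
    have hsplit : ({p, q, r, p + v, q + v, r + v} : Set E3)
        = ({p, q, p + v, q + v} : Set E3) ∪ {r, r + v} := by
      ext z; simp only [Set.mem_insert_iff, Set.mem_singleton_iff, Set.mem_union]; tauto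
    rw [hsplit]
    exact (face_eq ⟨p, by simp⟩ ⟨r, by simp⟩ ((innerSL ℝ n).toLinearMap)
      (by simpa using hS1) (by simpa using hS2) hc).symm
  · rw [hvs, show ({q - p, v} : Set E3) = Set.range ![q - p, v] by
      rw [Matrix.range_cons_cons_empty]]
    rw [finrank_span_eq_card hli]
    simp

lemma tri_face (a b c v : E3) (haff : AffineIndependent ℝ ![a, b, c])
    (hv : v ∉ Submodule.span ℝ {b - a, c - a}) :
    IsFaceOf (convexHull ℝ {a, b, c, a + v, b + v, c + v}) (convexHull ℝ {a, b, c}) := by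
  obtain ⟨n, hn0, hneg⟩ := exists_normal _ _ hv
  have hWm1 : b - a ∈ Submodule.span ℝ ({b - a, c - a} : Set E3) := Submodule.subset_span (by simp)
  have hWm2 : c - a ∈ Submodule.span ℝ ({b - a, c - a} : Set E3) := Submodule.subset_span (by simp)
  have hS1 : ∀ y ∈ ({a, b, c} : Set E3), ⟪n, y⟫ = ⟪n, a⟫ := by
    intro y hy
    simp only [Set.mem_insert_iff, Set.mem_singleton_iff] at hy
    rcases hy with h | h | h <;> rw [h]
    · nth_rewrite 1 [show b = a + (b - a) by abel]
      rw [inner_add_right, hn0 _ hWm1, add_zero]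
    · nth_rewrite 1 [show c = a + (c - a) by abel]
      rw [inner_add_right, hn0 _ hWm2, add_zero]
  have hS2 : ∀ y ∈ ({a + v, b + v, c + v} : Set E3), ⟪n, y⟫ ≤ ⟪n, a⟫ + ⟪n, v⟫ := by
    intro y hy
    simp only [Set.mem_insert_iff, Set.mem_singleton_iff] at hy
    rcases hy with h | h | h <;> rw [h]
    · rw [inner_add_right]
    · rw [show b + v = a + (b - a) + v by abel, inner_add_right, inner_add_right,
        hn0 _ hWm1, add_zero]
    · rw [show c + v = a + (c - a) + v by abel, inner_add_right, inner_add_right,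
        hn0 _ hWm2, add_zero]
  have hc : ⟪n, a⟫ + ⟪n, v⟫ < ⟪n, a⟫ := by linarith
  constructor
  · intro _
    refine ⟨innerSL ℝ n, ?_⟩
    have hsplit : ({a, b, c, a + v, b + v, c + v} : Set E3)
        = ({a, b, c} : Set E3) ∪ {a + v, b + v, c + v} := by
      ext z; simp only [Set.mem_insert_iff, Set.mem_singleton_iff, Set.mem_union]; tauto
    rw [hsplit]
    exact (face_eq ⟨a, by simp⟩ ⟨a + v, by simp⟩ ((innerSL ℝ n).toLinearMap)
      (by simpa using hS1) (by simpa using hS2) hc).symm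
  · rw [hull_vectorSpan_eq, show ({a, b, c} : Set E3) = Set.range ![a, b, c] by
      rw [Matrix.range_cons, Matrix.range_cons_cons_empty, Set.singleton_union]]
    exact haff.finrank_vectorSpan (by simp)

end Geo

section Main
open scoped RealInnerProductSpace
local notation "E3" => EuclideanSpace ℝ (Fin 3)
set_option maxHeartbeats 2000000

lemma collinear_of_rel (p q r : E3) (s : ℝ) (h : s • (q - p) = r - p) :
    Collinear ℝ ({p, q, r} : Set E3) := by
  refine (collinear_iff_of_mem (Set.mem_insert p {q, r})).2 ⟨q - p, ?_⟩
  intro x hx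
  simp only [Set.mem_insert_iff, Set.mem_singleton_iff] at hx
  rcases hx with h' | h' | h' <;> rw [h']
  · exact ⟨0, by simp⟩
  · exact ⟨1, by rw [vadd_eq_add, one_smul]; abel⟩
  · exact ⟨s, by rw [vadd_eq_add, h]; abel⟩

lemma aux_not_mem (a b c v p q r : E3) (hperm : ({p, q, r} : Set E3) = {a, b, c})
    (htri : ¬ Collinear ℝ ({a, b, c} : Set E3))
    (hv : v ∉ vectorSpan ℝ ({a, b, c} : Set E3)) :
    r - p ∉ Submodule.span ℝ {q - p, v} := by
  intro hmem
  obtain ⟨s, t, heq⟩ := Submodule.mem_span_pair.1 hmem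
  have hpm : p ∈ ({a, b, c} : Set E3) := by rw [← hperm]; simp
  have hqm : q ∈ ({a, b, c} : Set E3) := by rw [← hperm]; simp
  have hrm : r ∈ ({a, b, c} : Set E3) := by rw [← hperm]; simp
  have hq' : q - p ∈ vectorSpan ℝ ({a, b, c} : Set E3) := by
    have := vsub_mem_vectorSpan ℝ hqm hpm; rwa [vsub_eq_sub] at this
  have hr' : r - p ∈ vectorSpan ℝ ({a, b, c} : Set E3) := by
    have := vsub_mem_vectorSpan ℝ hrm hpm; rwa [vsub_eq_sub] at this
  rcases eq_or_ne t 0 with rfl | ht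
  · apply htri
    rw [← hperm]
    exact collinear_of_rel p q r s (by simpa using heq)
  · apply hv
    have hveq : v = t⁻¹ • ((r - p) - s • (q - p)) := by
      rw [← heq]; match_scalars <;> field_simp <;> ring
    rw [hveq]
    exact Submodule.smul_mem _ _ (Submodule.sub_mem _ hr' (Submodule.smul_mem _ _ hq'))

lemma aux_li (a b c v p q r : E3) (hperm : ({p, q, r} : Set E3) = {a, b, c})
    (htri : ¬ Collinear ℝ ({a, b, c} : Set E3))
    (hv : v ∉ vectorSpan ℝ ({a, b, c} : Set E3)) :
    LinearIndependent ℝ ![q - p, v] := by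
  have hpm : p ∈ ({a, b, c} : Set E3) := by rw [← hperm]; simp
  have hqm : q ∈ ({a, b, c} : Set E3) := by rw [← hperm]; simp
  have hq' : q - p ∈ vectorSpan ℝ ({a, b, c} : Set E3) := by
    have := vsub_mem_vectorSpan ℝ hqm hpm; rwa [vsub_eq_sub] at this
  rw [linearIndependent_fin2]
  constructor
  · simp only [Matrix.cons_val_one, Matrix.head_cons, Matrix.cons_val_zero]
    intro h0
    exact hv (h0 ▸ Submodule.zero_mem _)
  · intro s hs
    simp only [Matrix.cons_val_one, Matrix.head_cons, Matrix.cons_val_zero] at hs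
    rcases eq_or_ne s 0 with rfl | hsne
    · have hqp : q = p := by
        have : q - p = 0 := by rw [← hs]; simp
        rwa [sub_eq_zero] at this
      apply htri
      rw [← hperm, show ({p, q, r} : Set E3) = {q, p, r} by
        ext z; simp only [Set.mem_insert_iff, Set.mem_singleton_iff]; tauto, hqp,
        Set.insert_idem]
      exact collinear_pair ℝ p r
    · apply hv
      have : v = s⁻¹ • (q - p) := by rw [← hs, smul_smul, inv_mul_cancel₀ hsne, one_smul]
      rw [this]
      exact Submodule.smul_mem _ _ hq'

theorem stmt_7' (a b c v : EuclideanSpace ℝ (Fin 3))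
    (htri : ¬ Collinear ℝ ({a, b, c} : Set (EuclideanSpace ℝ (Fin 3))))
    (hv : v ∉ vectorSpan ℝ ({a, b, c} : Set (EuclideanSpace ℝ (Fin 3))))
    (P : Set (EuclideanSpace ℝ (Fin 3)))
    (hP : P = convexHull ℝ ({a, b, c, a + v, b + v, c + v} :
      Set (EuclideanSpace ℝ (Fin 3)))) :
    ∀ d : EuclideanSpace ℝ (Fin 3), d ≠ 0 →
      (∀ F, IsFaceOf P F → d ∉ vectorSpan ℝ F) → (((shadow P d).extremePoints ℝ).ncard = 5) := by
  intro d hd hface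
  -- basic memberships
  have hm1 : b - a ∈ vectorSpan ℝ ({a, b, c} : Set E3) := by
    have := vsub_mem_vectorSpan ℝ (show b ∈ ({a,b,c} : Set E3) by simp)
      (show a ∈ ({a,b,c} : Set E3) by simp)
    rwa [vsub_eq_sub] at this
  have hm2 : c - a ∈ vectorSpan ℝ ({a, b, c} : Set E3) := by
    have := vsub_mem_vectorSpan ℝ (show c ∈ ({a,b,c} : Set E3) by simp)
      (show a ∈ ({a,b,c} : Set E3) by simp)
    rwa [vsub_eq_sub] at this
  have li2' : ∀ s t : ℝ, s • (b - a) + t • (c - a) = 0 → s = 0 ∧ t = 0 := by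
    intro s t h
    by_contra hcon
    rw [not_and_or] at hcon
    apply htri
    rcases eq_or_ne t 0 with rfl | ht
    · have hs : s ≠ 0 := by tauto
      have hba : b - a = 0 := by
        have h' : s • (b - a) = 0 := by simpa using h
        rcases smul_eq_zero.1 h' with h'' | h''
        · exact absurd h'' hs
        · exact h''
      have hb : b = a := by rwa [sub_eq_zero] at hba
      rw [hb, Set.insert_idem]
      exact collinear_pair ℝ a c
    · have h2 : t • (c - a) = -(s • (b - a)) := eq_neg_of_add_eq_zero_left (by rw [add_comm]; exact h)
      refine collinear_of_rel a b c (t⁻¹ * (-s)) ?_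
      calc (t⁻¹ * (-s)) • (b - a) = t⁻¹ • (-(s • (b - a))) := by
            rw [smul_neg, smul_smul, mul_neg, neg_smul]
        _ = t⁻¹ • (t • (c - a)) := by rw [h2]
        _ = c - a := by rw [smul_smul, inv_mul_cancel₀ ht, one_smul]
  -- the triangle face
  have haff : AffineIndependent ℝ ![a, b, c] := affineIndependent_iff_not_collinear_set.2 htri
  have hv' : v ∉ Submodule.span ℝ ({b - a, c - a} : Set E3) := by
    intro hmem
    obtain ⟨s, t, heq⟩ := Submodule.mem_span_pair.1 hmem
    exact hv (heq ▸ Submodule.add_mem _ (Submodule.smul_mem _ _ hm1) (Submodule.smul_mem _ _ hm2))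
  have htri_face := tri_face a b c v haff hv'
  have hd_tri : ∀ s t : ℝ, d ≠ s • (b - a) + t • (c - a) := by
    intro s t hdeq
    apply hface _ (show IsFaceOf P _ by rw [hP]; exact htri_face)
    rw [hull_vectorSpan_eq, hdeq]
    exact Submodule.add_mem _ (Submodule.smul_mem _ _ hm1) (Submodule.smul_mem _ _ hm2)
  -- the three quadrilateral faces
  have hq_ab := quad_face a b c v
    (aux_not_mem a b c v a b c rfl htri hv) (aux_li a b c v a b c rfl htri hv)
  have hd_ab : d ∉ Submodule.span ℝ ({b - a, v} : Set E3) := by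
    intro hmem
    exact hface _ (show IsFaceOf P _ by rw [hP]; exact hq_ab.1) (hq_ab.2 ▸ hmem)
  have hperm_acb : ({a, c, b} : Set E3) = {a, b, c} := by
    ext z; simp only [Set.mem_insert_iff, Set.mem_singleton_iff]; tauto
  have hq_ac := quad_face a c b v
    (aux_not_mem a b c v a c b hperm_acb htri hv) (aux_li a b c v a c b hperm_acb htri hv)
  rw [show ({a, c, b, a + v, c + v, b + v} : Set E3) = {a, b, c, a + v, b + v, c + v} by
    ext z; simp only [Set.mem_insert_iff, Set.mem_singleton_iff]; tauto] at hq_ac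
  have hd_ac : d ∉ Submodule.span ℝ ({c - a, v} : Set E3) := by
    intro hmem
    exact hface _ (show IsFaceOf P _ by rw [hP]; exact hq_ac.1) (hq_ac.2 ▸ hmem)
  have hperm_bca : ({b, c, a} : Set E3) = {a, b, c} := by
    ext z; simp only [Set.mem_insert_iff, Set.mem_singleton_iff]; tauto
  have hq_bc := quad_face b c a v
    (aux_not_mem a b c v b c a hperm_bca htri hv) (aux_li a b c v b c a hperm_bca htri hv)
  rw [show ({b, c, a, b + v, c + v, a + v} : Set E3) = {a, b, c, a + v, b + v, c + v} by
    ext z; simp only [Set.mem_insert_iff, Set.mem_singleton_iff]; tauto] at hq_bc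
  have hd_bc : d ∉ Submodule.span ℝ ({c - b, v} : Set E3) := by
    intro hmem
    exact hface _ (show IsFaceOf P _ by rw [hP]; exact hq_bc.1) (hq_bc.2 ▸ hmem)
  -- coordinates of v in the basis (d, b - a, c - a)
  have li2 : LinearIndependent ℝ ![b - a, c - a] := by
    rw [linearIndependent_fin2]
    constructor
    · simp only [Matrix.cons_val_one, Matrix.head_cons, Matrix.cons_val_zero]
      intro h0
      have := li2' 0 1 (by rw [h0]; simp)
      norm_num at this
    · intro s hs
      simp only [Matrix.cons_val_one, Matrix.head_cons, Matrix.cons_val_zero] at hs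
      have := li2' 1 (-s) (by rw [← hs]; module)
      norm_num at this
  have li3 : LinearIndependent ℝ ![d, b - a, c - a] := by
    refine linearIndependent_fin_cons.2 ⟨li2, ?_⟩
    rw [Matrix.range_cons_cons_empty]
    intro hmem
    obtain ⟨s, t, heq⟩ := Submodule.mem_span_pair.1 hmem
    exact hd_tri s t heq.symm
  have hspan_top : Submodule.span ℝ (Set.range ![d, b - a, c - a]) = ⊤ := by
    apply Submodule.eq_top_of_finrank_eq
    rw [finrank_span_eq_card li3]
    simp [finrank_euclideanSpace]
  have hvmem : v ∈ Submodule.span ℝ (Set.range ![d, b - a, c - a]) :=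
    hspan_top ▸ Submodule.mem_top
  rw [Matrix.range_cons, Matrix.range_cons_cons_empty, Set.singleton_union,
    Submodule.mem_span_insert] at hvmem
  obtain ⟨γ, z, hz, hveq⟩ := hvmem
  obtain ⟨α, β, hzeq⟩ := Submodule.mem_span_pair.1 hz
  -- nondegeneracy of α, β, α + β
  have hαne : α ≠ 0 := by
    intro h0
    rcases eq_or_ne γ 0 with hγ | hγ
    · apply hv
      rw [hveq, hγ, ← hzeq, h0]
      simp only [zero_smul, zero_add, add_zero]
      exact Submodule.smul_mem _ _ hm2
    · apply hd_ac
      refine Submodule.mem_span_pair.2 ⟨-(γ⁻¹ * β), γ⁻¹, ?_⟩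
      rw [hveq, ← hzeq, h0]
      match_scalars <;> field_simp <;> ring
  have hβne : β ≠ 0 := by
    intro h0
    rcases eq_or_ne γ 0 with hγ | hγ
    · apply hv
      rw [hveq, hγ, ← hzeq, h0]
      simp only [zero_smul, zero_add, add_zero]
      exact Submodule.smul_mem _ _ hm1
    · apply hd_ab
      refine Submodule.mem_span_pair.2 ⟨-(γ⁻¹ * α), γ⁻¹, ?_⟩
      rw [hveq, ← hzeq, h0]
      match_scalars <;> field_simp <;> ring
  have hαβne : α + β ≠ 0 := by
    intro h0
    have hβ0 : β = -α := by linarith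
    rcases eq_or_ne γ 0 with hγ | hγ
    · apply hv
      rw [hveq, hγ, ← hzeq, hβ0]
      simp only [zero_smul, zero_add]
      exact Submodule.add_mem _ (Submodule.smul_mem _ _ hm1)
        (Submodule.smul_mem _ _ hm2)
    · apply hd_bc
      refine Submodule.mem_span_pair.2 ⟨γ⁻¹ * α, γ⁻¹, ?_⟩
      rw [hveq, ← hzeq, hβ0]
      match_scalars <;> field_simp <;> ring
  -- the projection
  have hfinK : Module.finrank ℝ ((ℝ ∙ d)ᗮ : Submodule ℝ E3) = 2 := by
    have h1 : Module.finrank ℝ (ℝ ∙ d : Submodule ℝ E3) = 1 := finrank_span_singleton hd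
    have h2 := Submodule.finrank_add_finrank_orthogonal (K := (ℝ ∙ d : Submodule ℝ E3))
    rw [h1, finrank_euclideanSpace] at h2
    simp only [Fintype.card_fin] at h2
    omega
  have hπd : Submodule.orthogonalProjectionOnto (ℝ ∙ d)ᗮ d = 0 := by
    rw [Submodule.orthogonalProjectionOnto_eq_zero_iff]
    exact Submodule.le_orthogonal_orthogonal _ (Submodule.mem_span_singleton_self d)
  have hker : ∀ x : E3, Submodule.orthogonalProjectionOnto (ℝ ∙ d)ᗮ x = 0 → x ∈ (ℝ ∙ d : Submodule ℝ E3) := by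
    intro x hx
    rw [Submodule.orthogonalProjectionOnto_eq_zero_iff] at hx
    rwa [Submodule.orthogonal_orthogonal] at hx
  set u1 := Submodule.orthogonalProjectionOnto (ℝ ∙ d)ᗮ (b - a) with hu1
  set u2 := Submodule.orthogonalProjectionOnto (ℝ ∙ d)ᗮ (c - a) with hu2
  have liu : ∀ s t : ℝ, s • u1 + t • u2 = 0 → s = 0 ∧ t = 0 := by
    intro s t h
    have hmem : s • (b - a) + t • (c - a) ∈ (ℝ ∙ d : Submodule ℝ E3) := by
      apply hker
      rw [map_add, map_smul, map_smul, ← hu1, ← hu2]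
      exact h
    obtain ⟨r, hr⟩ := Submodule.mem_span_singleton.1 hmem
    rcases eq_or_ne r 0 with rfl | hrne
    · exact li2' s t (by rw [← hr]; simp)
    · exfalso
      apply hd_tri (r⁻¹ * s) (r⁻¹ * t)
      calc d = r⁻¹ • (r • d) := by rw [smul_smul, inv_mul_cancel₀ hrne, one_smul]
        _ = r⁻¹ • (s • (b - a) + t • (c - a)) := by rw [hr]
        _ = (r⁻¹ * s) • (b - a) + (r⁻¹ * t) • (c - a) := by module
  have li_u : LinearIndependent ℝ ![u1, u2] := by
    rw [linearIndependent_fin2]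
    constructor
    · simp only [Matrix.cons_val_one, Matrix.head_cons, Matrix.cons_val_zero]
      intro h0
      have := liu 0 1 (by rw [h0]; simp)
      norm_num at this
    · intro s hs
      simp only [Matrix.cons_val_one, Matrix.head_cons, Matrix.cons_val_zero] at hs
      have := liu 1 (-s) (by rw [← hs]; module)
      norm_num at this
  have hcard : Fintype.card (Fin 2) = Module.finrank ℝ ((ℝ ∙ d)ᗮ : Submodule ℝ E3) := by
    simp [hfinK]
  set B := basisOfLinearIndependentOfCardEqFinrank li_u hcard with hBdef
  have hB : ⇑B = ![u1, u2] := coe_basisOfLinearIndependentOfCardEqFinrank _ _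
  set f := B.coord 0 with hfdef
  set g := B.coord 1 with hgdef
  have hB0 : B 0 = u1 := by rw [hB]; simp
  have hB1 : B 1 = u2 := by rw [hB]; simp
  have hf1 : f u1 = 1 := by rw [hfdef, ← hB0, Module.Basis.coord_apply, Module.Basis.repr_self]; simp
  have hf2 : f u2 = 0 := by rw [hfdef, ← hB1, Module.Basis.coord_apply, Module.Basis.repr_self]; simp
  have hg1 : g u1 = 0 := by rw [hgdef, ← hB0, Module.Basis.coord_apply, Module.Basis.repr_self]; simp
  have hg2 : g u2 = 1 := by rw [hgdef, ← hB1, Module.Basis.coord_apply, Module.Basis.repr_self]; simp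
  have hw : Submodule.orthogonalProjectionOnto (ℝ ∙ d)ᗮ v = α • u1 + β • u2 := by
    rw [hveq, ← hzeq, map_add, map_smul, hπd, smul_zero, zero_add, map_add, map_smul, map_smul,
      ← hu1, ← hu2]
  -- the shadow is the hull of the projected points
  have himg : shadow P d = convexHull ℝ
      ((⇑(Submodule.orthogonalProjectionOnto (ℝ ∙ d)ᗮ)) '' {a, b, c, a + v, b + v, c + v}) := by
    rw [shadow, hP]
    exact LinearMap.image_convexHull ((Submodule.orthogonalProjectionOnto (ℝ ∙ d)ᗮ).toLinearMap) _
  have hπb : Submodule.orthogonalProjectionOnto (ℝ ∙ d)ᗮ b = Submodule.orthogonalProjectionOnto (ℝ ∙ d)ᗮ a + u1 := by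
    rw [hu1, ← map_add]
    congr 1
    abel
  have hπc : Submodule.orthogonalProjectionOnto (ℝ ∙ d)ᗮ c = Submodule.orthogonalProjectionOnto (ℝ ∙ d)ᗮ a + u2 := by
    rw [hu2, ← map_add]
    congr 1
    abel
  have hπav : Submodule.orthogonalProjectionOnto (ℝ ∙ d)ᗮ (a + v)
      = Submodule.orthogonalProjectionOnto (ℝ ∙ d)ᗮ a + Submodule.orthogonalProjectionOnto (ℝ ∙ d)ᗮ v := map_add _ _ _
  have hπbv : Submodule.orthogonalProjectionOnto (ℝ ∙ d)ᗮ (b + v)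
      = Submodule.orthogonalProjectionOnto (ℝ ∙ d)ᗮ a + u1 + Submodule.orthogonalProjectionOnto (ℝ ∙ d)ᗮ v := by
    rw [map_add, hπb]
  have hπcv : Submodule.orthogonalProjectionOnto (ℝ ∙ d)ᗮ (c + v)
      = Submodule.orthogonalProjectionOnto (ℝ ∙ d)ᗮ a + u2 + Submodule.orthogonalProjectionOnto (ℝ ∙ d)ᗮ v := by
    rw [map_add, hπc]
  rw [himg, Set.image_insert_eq, Set.image_insert_eq, Set.image_insert_eq, Set.image_insert_eq,
    Set.image_insert_eq, Set.image_singleton, hπb, hπc, hπav, hπbv, hπcv]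
  exact key_pentagon u1 u2 (Submodule.orthogonalProjectionOnto (ℝ ∙ d)ᗮ v) f g hf1 hf2 hg1 hg2
    α β hαne hβne hαβne hw (Submodule.orthogonalProjectionOnto (ℝ ∙ d)ᗮ a)

/-- A triangular prism (the convex hull of a nondegenerate triangle `abc` and its
translate by `v`, where `v` is not parallel to the plane of the triangle) is
5-equiprojective: every orthogonal projection along a direction not parallel to any
of its faces is a pentagon. -/
theorem stmt_7 (a b c v : EuclideanSpace ℝ (Fin 3))
    (htri : ¬ Collinear ℝ ({a, b, c} : Set (EuclideanSpace ℝ (Fin 3))))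
    (hv : v ∉ vectorSpan ℝ ({a, b, c} : Set (EuclideanSpace ℝ (Fin 3))))
    (P : Set (EuclideanSpace ℝ (Fin 3)))
    (hP : P = convexHull ℝ ({a, b, c, a + v, b + v, c + v} :
      Set (EuclideanSpace ℝ (Fin 3)))) :
    ∀ d : EuclideanSpace ℝ (Fin 3), d ≠ 0 →
      (∀ F, IsFaceOf P F → d ∉ vectorSpan ℝ F) → IsKGon 5 (shadow P d) := by
  intro d hd hface
  exact stmt_7' a b c v htri hv P hP d hd hface

end Main
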